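/- Let ω ∈ (−1,1) be a quadratic irrational and let O be the Odd map, O(x) = |1/x| − (2⌊|1/x|/2⌋ + 1) (that is, |1/x| minus the odd integer nearest to |1/x|). Then ω is purely periodic under O (i.e. O^[p](ω) = ω for some integer p ≥ 1) if and only if its Galois conjugate ω' satisfies: ω' ≤ −τ − 1 in case ω < 0, or ω' ≤ −τ + 1 in case ω > 0, where τ = (1+√5)/2 is the golden ratio. -/

import Mathlib

/-- The golden ratio `τ = (1 + √5)/2`. -/
noncomputable def goldenRatio' : ℝ := (1 + Real.sqrt 5) / 2

/-- The Odd map `x ↦ |1/x| - (2⌊|1/x|/2⌋ + 1)` (i.e. `|1/x|` minus the odd integer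
nearest to `|1/x|`) on irrationals, extended by `0` at the remaining points. -/
noncomputable def oddMap (x : ℝ) : ℝ :=
  open Classical in
  if Irrational x then |1 / x| - (2 * (⌊|1 / x| / 2⌋ : ℤ) + 1) else 0


namespace OddCF

local notation "τ" => goldenRatio'

lemma sqrt5_mem : 2.2 < Real.sqrt 5 ∧ Real.sqrt 5 < 2.24 := by
  constructor
  · have : (2.2:ℝ) = Real.sqrt (2.2^2) := by
      rw [Real.sqrt_sq]; norm_num
    rw [this]
    apply Real.sqrt_lt_sqrt (by positivity)
    norm_num
  · have : (2.24:ℝ) = Real.sqrt (2.24^2) := by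
      rw [Real.sqrt_sq]; norm_num
    rw [this]
    apply Real.sqrt_lt_sqrt (by norm_num)
    norm_num

lemma gr_gt : (1.6:ℝ) < τ := by
  have := sqrt5_mem.1; unfold goldenRatio'; linarith

lemma gr_lt : τ < 1.62 := by
  have := sqrt5_mem.2; unfold goldenRatio'; linarith

lemma gr_sq : τ^2 = τ + 1 := by
  have h5 : Real.sqrt 5 ^ 2 = 5 := Real.sq_sqrt (by norm_num)
  unfold goldenRatio'; nlinarith [h5]

/-- reduced pair -/
def Red (x y : ℝ) : Prop :=
  (x < 0 ∧ y ≤ -τ - 1) ∨ (0 < x ∧ y ≤ -τ + 1)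

/-- `y` is the Galois conjugate of the quadratic irrational `x`. -/
def ConjPair (x y : ℝ) : Prop :=
  Irrational x ∧ ∃ a b c : ℤ, a ≠ 0 ∧
    (a:ℝ) * x^2 + (b:ℝ) * x + (c:ℝ) = 0 ∧ y = -(b:ℝ)/(a:ℝ) - x

lemma not_irrational_int_div_int (m n : ℤ) : ¬ Irrational ((m:ℝ)/(n:ℝ)) := by
  have : ((((m:ℚ)/(n:ℚ)):ℚ):ℝ) = (m:ℝ)/(n:ℝ) := by push_cast; ring
  rw [← this]; exact Rat.not_irrational _

lemma ConjPair.unique {x y y' : ℝ} (h : ConjPair x y) (h' : ConjPair x y') : y = y' := by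
  obtain ⟨hx, a, b, c, ha, hr, hy⟩ := h
  obtain ⟨-, a', b', c', ha', hr', hy'⟩ := h'
  have ha0 : (a:ℝ) ≠ 0 := Int.cast_ne_zero.mpr ha
  have ha0' : (a':ℝ) ≠ 0 := Int.cast_ne_zero.mpr ha'
  have hcomb : ((a'*b - a*b' : ℤ):ℝ) * x + ((a'*c - a*c' : ℤ):ℝ) = 0 := by
    push_cast
    linear_combination (a':ℝ) * hr - (a:ℝ) * hr'
  have hz : (a'*b - a*b' : ℤ) = 0 := by
    by_contra hne
    have hcast : ((a'*b - a*b' : ℤ):ℝ) ≠ 0 := Int.cast_ne_zero.mpr hne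
    have : x = ((-(a'*c - a*c') : ℤ):ℝ) / ((a'*b - a*b' : ℤ):ℝ) := by
      rw [eq_div_iff hcast]
      push_cast at hcomb ⊢
      linarith [hcomb]
    exact not_irrational_int_div_int _ _ (this ▸ hx)
  have hzr : (a':ℝ)*(b:ℝ) - (a:ℝ)*(b':ℝ) = 0 := by
    have := congrArg (Int.cast : ℤ → ℝ) hz
    push_cast at this
    linarith [this]
  have key : (b:ℝ)/(a:ℝ) = (b':ℝ)/(a':ℝ) := by
    field_simp
    nlinarith [hzr]
  rw [hy, hy', neg_div, neg_div, key]


lemma ConjPair.symm {x y : ℝ} (h : ConjPair x y) : ConjPair y x := by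
  obtain ⟨hx, a, b, c, ha, hr, hy⟩ := h
  have ha0 : (a:ℝ) ≠ 0 := Int.cast_ne_zero.mpr ha
  have hyirr : Irrational y := by
    rw [hy]
    have : -(b:ℝ)/(a:ℝ) - x = -((x : ℝ) - (-(b:ℝ)/(a:ℝ))) := by ring
    rw [this]
    apply Irrational.neg
    have : ((-(b:ℚ)/(a:ℚ) : ℚ):ℝ) = -(b:ℝ)/(a:ℝ) := by push_cast; ring
    rw [← this]
    exact hx.sub_ratCast _
  refine ⟨hyirr, a, b, c, ha, ?_, ?_⟩
  · rw [hy]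
    have heq : (a:ℝ) * (-(b:ℝ)/(a:ℝ) - x)^2 + (b:ℝ) * (-(b:ℝ)/(a:ℝ) - x) + (c:ℝ)
        = (a:ℝ)*x^2 + (b:ℝ)*x + (c:ℝ) := by
      field_simp
      ring
    rw [heq, hr]
  · rw [hy]; ring

lemma ConjPair.irrational' {x y : ℝ} (h : ConjPair x y) : Irrational y := h.symm.1

lemma ConjPair.ne {x y : ℝ} (h : ConjPair x y) : x ≠ y := by
  obtain ⟨hx, a, b, c, ha, hr, hy⟩ := h
  intro hxy
  have ha0 : (a:ℝ) ≠ 0 := Int.cast_ne_zero.mpr ha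
  have : x = ((-b:ℤ):ℝ) / ((2*a:ℤ):ℝ) := by
    push_cast
    rw [hy] at hxy
    field_simp at hxy ⊢
    linarith [hxy]
  exact not_irrational_int_div_int _ _ (this ▸ hx)

lemma ConjPair.ne_one_sub_gr {x y : ℝ} (h : ConjPair x y) (_h1 : -1 < x) (h2 : x < 1) :
    y ≠ 1 - τ := by
  intro hy
  have hyirr : Irrational y := h.irrational'
  have hcp : ConjPair y τ := by
    refine ⟨hyirr, 1, -1, -1, one_ne_zero, ?_, ?_⟩
    · rw [hy]; push_cast; nlinarith [gr_sq]
    · rw [hy]; push_cast; ring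
  have hxt : x = τ := h.symm.unique hcp
  have := gr_gt
  linarith [h2]

noncomputable def conjOf (x : ℝ) : ℝ :=
  open Classical in
  if h : ∃ y, ConjPair x y then h.choose else 0

lemma conjOf_eq {x y : ℝ} (h : ConjPair x y) : conjOf x = y := by
  have he : ∃ y, ConjPair x y := ⟨y, h⟩
  rw [conjOf, dif_pos he]
  exact he.choose_spec.unique h


lemma oddMap_step (x : ℝ) (hx : Irrational x) (h1 : -1 < x) (h2 : x < 1) :
    ∃ ε d : ℤ, (ε = 1 ∧ 0 < x ∨ ε = -1 ∧ x < 0) ∧ Odd d ∧ 1 ≤ d ∧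
      oddMap x = (ε:ℝ)/x - (d:ℝ) ∧ Irrational (oddMap x) ∧ -1 < oddMap x ∧ oddMap x < 1 ∧
      (oddMap x < 0 → 3 ≤ d) := by
  have hx0 : x ≠ 0 := fun h => by rw [h] at hx; exact not_irrational_zero hx
  have hAirr : Irrational |1/x| := by
    rcases abs_choice (1/x) with h | h <;> rw [h]
    · simpa [one_div] using hx.inv
    · simpa [one_div] using hx.inv.neg
  have hxabs : |x| < 1 := abs_lt.mpr ⟨h1, h2⟩
  have hxabs0 : 0 < |x| := abs_pos.mpr hx0
  have hA1 : 1 < |1/x| := by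
    rw [abs_div, abs_one]
    rw [lt_div_iff₀ hxabs0]
    linarith
  set d : ℤ := 2 * ⌊|1/x| / 2⌋ + 1 with hd
  have hom : oddMap x = |1/x| - (d:ℝ) := by
    rw [oddMap, if_pos hx, hd]; push_cast; ring
  have hdr : (d:ℝ) = 2*((⌊|1/x| / 2⌋ : ℤ):ℝ) + 1 := by rw [hd]; push_cast; ring
  have hfl := Int.floor_le (|1/x| / 2)
  have hfl' := Int.lt_floor_add_one (|1/x| / 2)
  have hd1 : 1 ≤ d := by
    have : 0 ≤ ⌊|1/x| / 2⌋ := Int.floor_nonneg.mpr (by positivity)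
    omega
  have homlt : oddMap x < 1 := by rw [hom, hdr]; linarith
  have homge : -1 ≤ oddMap x := by rw [hom, hdr]; linarith
  have homirr : Irrational (oddMap x) := by rw [hom]; exact hAirr.sub_intCast d
  have homgt : -1 < oddMap x := by
    rcases lt_or_eq_of_le homge with h | h
    · exact h
    · exfalso
      have : oddMap x = ((-1 : ℤ):ℝ) := by rw [← h]; norm_num
      exact homirr.ne_int (-1) this
  have hmar : oddMap x < 0 → 3 ≤ d := by
    intro hneg
    rcases lt_or_ge d 3 with h | h
    · exfalso
      have hd1' : d = 1 := by omega
      rw [hom, hd1'] at hneg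
      push_cast at hneg
      linarith [hA1]
    · exact h
  refine ⟨if 0 < x then 1 else -1, d, ?_, ⟨⌊|1/x| / 2⌋, by omega⟩, hd1, ?_, homirr, homgt, homlt, hmar⟩
  · rcases lt_trichotomy 0 x with h | h | h
    · left; simp [h]
    · exact absurd h.symm hx0
    · right; simp [not_lt.mpr h.le, h]
  · rcases lt_trichotomy 0 x with h | h | h
    · rw [if_pos h, hom]
      have : |1/x| = 1/x := abs_of_pos (by positivity)
      rw [this]; push_cast; ring
    · exact absurd h.symm hx0
    · rw [if_neg (not_lt.mpr h.le), hom]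
      have : |1/x| = -(1/x) := abs_of_neg (by simpa using div_neg_of_pos_of_neg one_pos h)
      rw [this]; push_cast; ring


lemma conj_irr_aux {x : ℝ} (hx : Irrational x) (b a : ℤ) : Irrational (-(b:ℝ)/(a:ℝ) - x) := by
  have : -(b:ℝ)/(a:ℝ) - x = -((x : ℝ) - ((-(b:ℚ)/(a:ℚ) : ℚ):ℝ)) := by push_cast; ring
  rw [this]
  exact (hx.sub_ratCast _).neg

lemma disc_step (a b c ε d : ℤ) (hε : ε = 1 ∨ ε = -1) :
    (2*c*d + ε*b)^2 - 4*c*(c*d^2 + ε*b*d + a) = b^2 - 4*a*c := by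
  rcases hε with h | h <;> subst h <;> ring

lemma conj_step (x y : ℝ) (hx : Irrational x) (a b c : ℤ) (ha : a ≠ 0)
    (hr : (a:ℝ)*x^2 + (b:ℝ)*x + (c:ℝ) = 0) (hy : y = -(b:ℝ)/(a:ℝ) - x)
    (ε d : ℤ) (hε : ε = 1 ∨ ε = -1) :
    c ≠ 0 ∧
    (c:ℝ)*((ε:ℝ)/x - (d:ℝ))^2 + ((2*c*d + ε*b : ℤ):ℝ)*((ε:ℝ)/x - (d:ℝ))
      + ((c*d^2 + ε*b*d + a : ℤ):ℝ) = 0 ∧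
    (ε:ℝ)/y - (d:ℝ) = -((2*c*d + ε*b : ℤ):ℝ)/((c:ℤ):ℝ) - ((ε:ℝ)/x - (d:ℝ)) := by
  have hx0 : x ≠ 0 := fun h => by rw [h] at hx; exact not_irrational_zero hx
  have ha0 : (a:ℝ) ≠ 0 := Int.cast_ne_zero.mpr ha
  have hyirr : Irrational y := hy ▸ conj_irr_aux hx b a
  have hy0 : y ≠ 0 := fun h => by rw [h] at hyirr; exact not_irrational_zero hyirr
  have hc : c ≠ 0 := by
    intro hc0
    have hcr : (c:ℝ) = 0 := by exact_mod_cast congrArg (Int.cast : ℤ → ℝ) hc0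
    have hfac : x * ((a:ℝ)*x + (b:ℝ)) = 0 := by rw [hcr] at hr; linear_combination hr
    have : (a:ℝ)*x + (b:ℝ) = 0 := by
      rcases mul_eq_zero.mp hfac with h | h
      · exact absurd h hx0
      · exact h
    have : x = ((-b : ℤ):ℝ)/((a : ℤ):ℝ) := by push_cast; field_simp; linarith
    exact not_irrational_int_div_int _ _ (this ▸ hx)
  have hc0 : (c:ℝ) ≠ 0 := Int.cast_ne_zero.mpr hc
  have hsum : x + y = -(b:ℝ)/(a:ℝ) := by rw [hy]; ring
  have hprod : x * y = (c:ℝ)/(a:ℝ) := by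
    rw [hy]; field_simp; linear_combination -hr
  have hinv : 1/x + 1/y = -(b:ℝ)/(c:ℝ) := by
    have h1 : 1/x + 1/y = (x + y)/(x*y) := by field_simp; ring
    rw [h1, hsum, hprod]
    field_simp
  refine ⟨hc, ?_, ?_⟩
  · have key : (c:ℝ)*((ε:ℝ)/x - (d:ℝ))^2 + ((2*c*d + ε*b : ℤ):ℝ)*((ε:ℝ)/x - (d:ℝ))
        + ((c*d^2 + ε*b*d + a : ℤ):ℝ)
        = ((a:ℝ)*x^2 + (b:ℝ)*x + (c:ℝ))/x^2 := by
      rcases hε with h | h <;> subst h <;> push_cast <;> field_simp <;> ring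
    rw [key, hr]
    simp
  · rcases hε with h | h <;> subst h <;> push_cast
    · linear_combination hinv + 2*(d:ℝ)*(mul_inv_cancel₀ hc0)
    · linear_combination -hinv + 2*(d:ℝ)*(mul_inv_cancel₀ hc0)


lemma ConjPair.step {x y : ℝ} (h : ConjPair x y) (ε d : ℤ) (hε : ε = 1 ∨ ε = -1)
    (hz : Irrational ((ε:ℝ)/x - (d:ℝ))) :
    ConjPair ((ε:ℝ)/x - (d:ℝ)) ((ε:ℝ)/y - (d:ℝ)) := by
  obtain ⟨hx, a, b, c, ha, hr, hy⟩ := h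
  obtain ⟨hc, hroot, hval⟩ := conj_step x y hx a b c ha hr hy ε d hε
  exact ⟨hz, c, 2*c*d + ε*b, c*d^2 + ε*b*d + a, hc, hroot, hval⟩

lemma red_step {x y x' y' : ℝ} {ε d : ℤ}
    (hsx : ε = 1 ∧ 0 < x ∨ ε = -1 ∧ x < 0) (hd1 : 1 ≤ d)
    (hy' : y' = (ε:ℝ)/y - (d:ℝ))
    (hmar : x' < 0 → 3 ≤ d) (hx'0 : x' ≠ 0)
    (hred : Red x y) : Red x' y' := by
  have ht1 : (1.6:ℝ) < τ := gr_gt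
  have ht2 : τ < 1.62 := gr_lt
  have hsq : τ^2 = τ + 1 := gr_sq
  have hdr : (1:ℝ) ≤ (d:ℝ) := by exact_mod_cast hd1
  rcases hred with ⟨hx, hy⟩ | ⟨hx, hy⟩
  · -- x < 0, ε = -1, y ≤ -τ-1
    have hε : ε = -1 := by
      rcases hsx with ⟨h, h'⟩ | ⟨h, h'⟩
      · linarith
      · exact h
    subst hε
    push_cast at hy'
    have hyneg : y < 0 := by linarith
    have hkey : (-1)/y ≤ 2 - τ := by
      rw [div_le_iff_of_neg hyneg]
      nlinarith
    rcases lt_or_gt_of_ne hx'0 with hneg | hpos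
    · left
      refine ⟨hneg, ?_⟩
      have h3 : (3:ℝ) ≤ (d:ℝ) := by exact_mod_cast hmar hneg
      rw [hy']
      linarith
    · right
      refine ⟨hpos, ?_⟩
      rw [hy']
      linarith
  · -- 0 < x, ε = 1, y ≤ -τ+1
    have hε : ε = 1 := by
      rcases hsx with ⟨h, h'⟩ | ⟨h, h'⟩
      · exact h
      · linarith
    subst hε
    push_cast at hy'
    have hyneg : y < 0 := by linarith
    have hkey : 1/y < 0 := by
      apply div_neg_of_pos_of_neg one_pos hyneg
    rcases lt_or_gt_of_ne hx'0 with hneg | hpos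
    · left
      refine ⟨hneg, ?_⟩
      have h3 : (3:ℝ) ≤ (d:ℝ) := by exact_mod_cast hmar hneg
      rw [hy']
      linarith
    · right
      refine ⟨hpos, ?_⟩
      rw [hy']
      linarith


lemma lead_bound {x y : ℝ} (a b c : ℤ) (ha : a ≠ 0)
    (hr : (a:ℝ)*x^2 + (b:ℝ)*x + (c:ℝ) = 0) (hy : y = -(b:ℝ)/(a:ℝ) - x)
    (h1 : -1 < x) (h2 : x < 1) (hred : Red x y) :
    ((a^2 : ℤ):ℝ) ≤ 3 * ((b^2 - 4*a*c : ℤ):ℝ) := by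
  have ha0 : (a:ℝ) ≠ 0 := Int.cast_ne_zero.mpr ha
  have hay : (a:ℝ)*y = -(b:ℝ) - (a:ℝ)*x := by rw [hy]; field_simp
  have hid : (a:ℝ)^2*(x - y)^2 = (b:ℝ)^2 - 4*(a:ℝ)*(c:ℝ) := by
    linear_combination ((a:ℝ)*y - (a:ℝ)*x - (b:ℝ) - 2*(a:ℝ)*x)*hay + 4*(a:ℝ)*hr
  have ht1 : (1.6:ℝ) < τ := gr_gt
  have ht2 : τ < 1.62 := gr_lt
  have hsq : τ^2 = τ + 1 := gr_sq
  have hgap : (1:ℝ)/3 ≤ (x - y)^2 := by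
    rcases hred with ⟨hx, hyr⟩ | ⟨hx, hyr⟩
    · nlinarith
    · nlinarith
  have := sq_nonneg ((a:ℝ))
  push_cast
  nlinarith [hid, hgap, sq_nonneg ((a:ℝ))]

lemma quad_root_form (a b c : ℤ) (ha : a ≠ 0) (x : ℝ)
    (hr : (a:ℝ)*x^2 + (b:ℝ)*x + (c:ℝ) = 0) :
    x = (-(b:ℝ) + Real.sqrt (((b^2 - 4*a*c : ℤ):ℝ)))/(2*(a:ℝ)) ∨
    x = (-(b:ℝ) - Real.sqrt (((b^2 - 4*a*c : ℤ):ℝ)))/(2*(a:ℝ)) := by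
  have ha0 : (a:ℝ) ≠ 0 := Int.cast_ne_zero.mpr ha
  have hsq : ((b^2 - 4*a*c : ℤ):ℝ) = (2*(a:ℝ)*x + (b:ℝ))^2 := by
    push_cast
    linear_combination (-4*(a:ℝ))*hr
  have habs : Real.sqrt (((b^2 - 4*a*c : ℤ):ℝ)) = |2*(a:ℝ)*x + (b:ℝ)| := by
    rw [hsq, Real.sqrt_sq_eq_abs]
  rcases abs_choice (2*(a:ℝ)*x + (b:ℝ)) with h | h
  · left
    rw [habs, h]
    field_simp
    ring
  · right
    rw [habs, h]
    field_simp
    ring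

lemma badset_finite (M : ℤ) : Set.Finite {x : ℝ | ∃ a b c : ℤ, a ≠ 0 ∧
    |a| ≤ M ∧ |b| ≤ M ∧ |c| ≤ M ∧ (a:ℝ)*x^2 + (b:ℝ)*x + (c:ℝ) = 0} := by
  classical
  set F : Set (ℤ × ℤ × ℤ) := Set.Icc (-M, -M, -M) (M, M, M) with hF
  have hFfin : F.Finite := Set.finite_Icc _ _
  set g1 : ℤ × ℤ × ℤ → ℝ := fun t =>
    (-(t.2.1:ℝ) + Real.sqrt (((t.2.1^2 - 4*t.1*t.2.2 : ℤ):ℝ)))/(2*(t.1:ℝ)) with hg1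
  set g2 : ℤ × ℤ × ℤ → ℝ := fun t =>
    (-(t.2.1:ℝ) - Real.sqrt (((t.2.1^2 - 4*t.1*t.2.2 : ℤ):ℝ)))/(2*(t.1:ℝ)) with hg2
  apply Set.Finite.subset ((hFfin.image g1).union (hFfin.image g2))
  rintro x ⟨a, b, c, ha, haM, hbM, hcM, hr⟩
  have hmem : (a, b, c) ∈ F := by
    have h1 := abs_le.mp haM
    have h2 := abs_le.mp hbM
    have h3 := abs_le.mp hcM
    simp only [hF, Set.mem_Icc, Prod.mk_le_mk]
    exact ⟨⟨h1.1, h2.1, h3.1⟩, h1.2, h2.2, h3.2⟩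
  rcases quad_root_form a b c ha x hr with h | h
  · left; exact ⟨(a,b,c), hmem, h.symm⟩
  · right; exact ⟨(a,b,c), hmem, h.symm⟩


/-- window bounds for the conjugate recursion: `w + d = ε/y` lies in `(-τ,0)` or `(0,2-τ]`. -/
lemma window {x y w : ℝ} {ε d : ℤ}
    (hcx : ConjPair x y) (hx1 : -1 < x) (hx2 : x < 1)
    (hred : Red x y)
    (hsx : ε = 1 ∧ 0 < x ∨ ε = -1 ∧ x < 0)
    (hw : w = (ε:ℝ)/y - (d:ℝ)) :
    -τ < w + d ∧ w + d ≤ 2 - τ ∧ w + d ≠ 0 ∧ (ε = 1 ↔ w + d < 0) := by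
  have ht1 : (1.6:ℝ) < τ := gr_gt
  have ht2 : τ < 1.62 := gr_lt
  have hsq : τ^2 = τ + 1 := gr_sq
  have hwd : w + d = (ε:ℝ)/y := by rw [hw]; ring
  rcases hsx with ⟨hε, hx⟩ | ⟨hε, hx⟩
  · -- ε = 1, 0 < x, so Red gives y ≤ 1-τ, and y ≠ 1-τ
    have hyle : y ≤ -τ + 1 := by
      rcases hred with ⟨h, _⟩ | ⟨_, h⟩
      · linarith
      · exact h
    have hyne : y ≠ 1 - τ := hcx.ne_one_sub_gr hx1 hx2
    have hylt : y < 1 - τ := lt_of_le_of_ne (by linarith) hyne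
    have hyneg : y < 0 := by linarith
    subst hε
    push_cast at hwd
    have hlt0 : w + d < 0 := by
      rw [hwd]
      exact div_neg_of_pos_of_neg one_pos hyneg
    have hgt : -τ < w + d := by
      rw [hwd, lt_div_iff_of_neg hyneg]
      nlinarith
    exact ⟨hgt, by linarith, by linarith, by simp [hlt0]⟩
  · -- ε = -1, x < 0, Red gives y ≤ -τ-1
    have hyle : y ≤ -τ - 1 := by
      rcases hred with ⟨_, h⟩ | ⟨h, _⟩
      · exact h
      · linarith
    have hyneg : y < 0 := by linarith
    subst hε
    push_cast at hwd
    have hgt0 : 0 < w + d := by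
      rw [hwd]
      exact div_pos_of_neg_of_neg (by norm_num) hyneg
    have hle : w + d ≤ 2 - τ := by
      rw [hwd, div_le_iff_of_neg hyneg]
      nlinarith
    refine ⟨by linarith, hle, by linarith, ?_⟩
    constructor
    · intro h; norm_num at h
    · intro h; linarith

lemma back_step {x y X Y z w : ℝ} {ε d E D : ℤ}
    (hcx : ConjPair x y) (hCX : ConjPair X Y)
    (hx1 : -1 < x) (hx2 : x < 1) (hX1 : -1 < X) (hX2 : X < 1)
    (hredx : Red x y) (hredX : Red X Y)
    (hsx : ε = 1 ∧ 0 < x ∨ ε = -1 ∧ x < 0) (hsX : E = 1 ∧ 0 < X ∨ E = -1 ∧ X < 0)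
    (hd : Odd d) (hD : Odd D)
    (hz : z = (ε:ℝ)/x - (d:ℝ)) (hzX : z = (E:ℝ)/X - (D:ℝ))
    (hw : w = (ε:ℝ)/y - (d:ℝ)) (hwX : w = (E:ℝ)/Y - (D:ℝ)) :
    x = X := by
  obtain ⟨hgt, hle, hne, hiff⟩ := window hcx hx1 hx2 hredx hsx hw
  obtain ⟨hgt', hle', hne', hiff'⟩ := window hCX hX1 hX2 hredX hsX hwX
  have ht1 : (1.6:ℝ) < τ := gr_gt
  have ht2 : τ < 1.62 := gr_lt
  -- d = D
  have hdD : d = D := by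
    have hr1 : ((d:ℝ)) - D < 2 := by linarith
    have hr2 : ((D:ℝ)) - d < 2 := by linarith
    have hi1 : d - D < 2 := by exact_mod_cast hr1
    have hi2 : D - d < 2 := by exact_mod_cast hr2
    obtain ⟨k, hk⟩ := hd
    obtain ⟨l, hl⟩ := hD
    omega
  subst hdD
  have hsseq : w + (d:ℝ) = w + (d:ℝ) := rfl
  -- ε = E
  have hεE : ε = E := by
    rcases hsx with ⟨h1, -⟩ | ⟨h1, hx⟩ <;> rcases hsX with ⟨h2, -⟩ | ⟨h2, hX⟩
    · rw [h1, h2]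
    · exfalso
      have hlt := hiff.mp h1
      have : ¬ (E = 1) := by rw [h2]; norm_num
      have := (not_iff_not.mpr hiff').mp this
      push_neg at this
      rcases lt_or_eq_of_le this with h | h
      · linarith
      · exact hne h.symm
    · exfalso
      have hlt := hiff'.mp h2
      have : ¬ (ε = 1) := by rw [h1]; norm_num
      have := (not_iff_not.mpr hiff).mp this
      push_neg at this
      rcases lt_or_eq_of_le this with h | h
      · linarith
      · exact hne h.symm
    · rw [h1, h2]
  subst hεE
  -- now invert
  have hx0 : x ≠ 0 := by
    rcases hsx with ⟨-, h⟩ | ⟨-, h⟩ <;> exact (by intro he; rw [he] at h; exact lt_irrefl 0 h)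
  have hX0 : X ≠ 0 := by
    rcases hsX with ⟨-, h⟩ | ⟨-, h⟩ <;> exact (by intro he; rw [he] at h; exact lt_irrefl 0 h)
  have hε1 : (ε:ℝ) ≠ 0 := by
    rcases hsx with ⟨h, -⟩ | ⟨h, -⟩ <;> rw [h] <;> norm_num
  have h1 : (ε:ℝ)/x = (ε:ℝ)/X := by
    have ha1 : z + (d:ℝ) = (ε:ℝ)/x := by rw [hz]; ring
    have ha2 : z + (d:ℝ) = (ε:ℝ)/X := by rw [hzX]; ring
    rw [← ha1, ha2]
  rw [div_eq_div_iff hx0 hX0] at h1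
  have : X = x := by
    apply mul_left_cancel₀ hε1
    linarith [h1]
  exact this.symm

lemma red_of_lt_neg_d {x' y' : ℝ} {d : ℤ} (hd1 : 1 ≤ d) (hmar : x' < 0 → 3 ≤ d)
    (hx'0 : x' ≠ 0) (hy' : y' < -(d:ℝ)) : Red x' y' := by
  have ht1 : (1.6:ℝ) < τ := gr_gt
  have ht2 : τ < 1.62 := gr_lt
  rcases hx'0.lt_or_gt with hn | hp
  · left
    refine ⟨hn, ?_⟩
    have h3 : (3:ℝ) ≤ (d:ℝ) := by exact_mod_cast hmar hn
    linarith
  · right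
    refine ⟨hp, ?_⟩
    have hdr : (1:ℝ) ≤ (d:ℝ) := by exact_mod_cast hd1
    linarith

end OddCF

set_option maxHeartbeats 1600000 in
open OddCF in
/-- A quadratic irrational `ω ∈ (-1,1)` is purely periodic under the Odd map iff its
Galois conjugate `ω' = -b/a - ω` satisfies `ω' ≤ -τ-1` in case `ω < 0`, or
`ω' ≤ -τ+1` in case `ω > 0`. -/
theorem odd_purely_periodic_iff
    (ω : ℝ) (hmem : ω ∈ Set.Ioo (-1 : ℝ) 1) (hirr : Irrational ω)
    (a b c : ℤ) (ha : a ≠ 0)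
    (hroot : (a : ℝ) * ω ^ 2 + (b : ℝ) * ω + (c : ℝ) = 0) :
    (∃ p : ℕ, 1 ≤ p ∧ oddMap^[p] ω = ω) ↔
      ((ω < 0 ∧ -(b : ℝ) / (a : ℝ) - ω ≤ -goldenRatio' - 1) ∨
       (0 < ω ∧ -(b : ℝ) / (a : ℝ) - ω ≤ -goldenRatio' + 1)) := by
  classical
  obtain ⟨h1, h2⟩ := hmem
  set w : ℕ → ℝ := fun n => oddMap^[n] ω with hwdef
  set η : ℕ → ℝ := fun n => OddCF.conjOf (w n) with hηdef
  have hw0 : w 0 = ω := rfl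
  have hwsucc : ∀ n, w (n+1) = oddMap (w n) := fun n => Function.iterate_succ_apply' oddMap n ω
  have hcp0 : ConjPair ω (-(b:ℝ)/(a:ℝ) - ω) := ⟨hirr, a, b, c, ha, hroot, rfl⟩
  have hη0 : η 0 = -(b:ℝ)/(a:ℝ) - ω := conjOf_eq hcp0
  have horb : ∀ n, Irrational (w n) ∧ (-1 < w n ∧ w n < 1) ∧ ConjPair (w n) (η n) := by
    intro n
    induction n with
    | zero =>
      refine ⟨hirr, ⟨h1, h2⟩, ?_⟩
      rw [hη0]; exact hcp0
    | succ n ih =>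
      obtain ⟨hirrn, ⟨hn1, hn2⟩, hcpn⟩ := ih
      obtain ⟨ε, d, hsx, hodd, hd1, heq, hirr', hgt, hlt, hmar⟩ :=
        oddMap_step (w n) hirrn hn1 hn2
      have hε : ε = 1 ∨ ε = -1 := hsx.imp And.left And.left
      have hirrz : Irrational ((ε:ℝ)/(w n) - (d:ℝ)) := heq ▸ hirr'
      have hcp' : ConjPair ((ε:ℝ)/(w n) - (d:ℝ)) ((ε:ℝ)/(η n) - (d:ℝ)) :=
        hcpn.step ε d hε hirrz
      have hw' : w (n+1) = (ε:ℝ)/(w n) - (d:ℝ) := by rw [hwsucc n, heq]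
      refine ⟨by rw [hwsucc n]; exact hirr', ⟨by rw [hwsucc n]; exact hgt,
        by rw [hwsucc n]; exact hlt⟩, ?_⟩
      have : η (n+1) = (ε:ℝ)/(η n) - (d:ℝ) := by
        show OddCF.conjOf (w (n+1)) = _
        rw [hw']
        exact conjOf_eq hcp'
      rw [this, hw']
      exact hcp'
  have hstep : ∀ n, ∃ ε d : ℤ, (ε = 1 ∧ 0 < w n ∨ ε = -1 ∧ w n < 0) ∧ Odd d ∧ 1 ≤ d ∧
      w (n+1) = (ε:ℝ)/(w n) - (d:ℝ) ∧ η (n+1) = (ε:ℝ)/(η n) - (d:ℝ) ∧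
      (w (n+1) < 0 → 3 ≤ d) := by
    intro n
    obtain ⟨hirrn, ⟨hn1, hn2⟩, hcpn⟩ := horb n
    obtain ⟨ε, d, hsx, hodd, hd1, heq, hirr', hgt, hlt, hmar⟩ :=
      oddMap_step (w n) hirrn hn1 hn2
    have hε : ε = 1 ∨ ε = -1 := hsx.imp And.left And.left
    have hirrz : Irrational ((ε:ℝ)/(w n) - (d:ℝ)) := heq ▸ hirr'
    have hcp' : ConjPair ((ε:ℝ)/(w n) - (d:ℝ)) ((ε:ℝ)/(η n) - (d:ℝ)) :=
      hcpn.step ε d hε hirrz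
    have hw' : w (n+1) = (ε:ℝ)/(w n) - (d:ℝ) := by rw [hwsucc n, heq]
    refine ⟨ε, d, hsx, hodd, hd1, hw', ?_, ?_⟩
    · show OddCF.conjOf (w (n+1)) = _
      rw [hw']
      exact conjOf_eq hcp'
    · intro hneg
      apply hmar
      rw [← hwsucc n]
      exact hneg
  -- convenient facts
  have hwirr : ∀ n, Irrational (w n) := fun n => (horb n).1
  have hw1 : ∀ n, -1 < w n := fun n => (horb n).2.1.1
  have hw2 : ∀ n, w n < 1 := fun n => (horb n).2.1.2
  have hcp : ∀ n, ConjPair (w n) (η n) := fun n => (horb n).2.2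
  have hηirr : ∀ n, Irrational (η n) := fun n => (hcp n).irrational'
  have hwne0 : ∀ n, w n ≠ 0 := fun n hz => by
    have := hwirr n; rw [hz] at this; exact not_irrational_zero this
  have hηne0 : ∀ n, η n ≠ 0 := fun n hz => by
    have := hηirr n; rw [hz] at this; exact not_irrational_zero this
  have hRHS : ((ω < 0 ∧ -(b : ℝ) / (a : ℝ) - ω ≤ -goldenRatio' - 1) ∨
       (0 < ω ∧ -(b : ℝ) / (a : ℝ) - ω ≤ -goldenRatio' + 1)) ↔ Red (w 0) (η 0) := by
    rw [hη0, hw0]; rfl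
  rw [hRHS]
  constructor
  · rintro ⟨p, hp1, hper⟩
    by_contra hnred
    have hwp : ∀ k, w (k + p) = w k := by
      intro k
      show oddMap^[k+p] ω = oddMap^[k] ω
      rw [Function.iterate_add_apply, hper]
    have hηp : ∀ k, η (k + p) = η k := by
      intro k
      show OddCF.conjOf (w (k+p)) = OddCF.conjOf (w k)
      rw [hwp]
    have hwmul : ∀ k, w (p * k) = ω := by
      intro k
      show oddMap^[p*k] ω = ω
      rw [Function.iterate_mul]
      exact Function.iterate_fixed hper k
    have ht1 : (1.6:ℝ) < goldenRatio' := OddCF.gr_gt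
    have ht2 : goldenRatio' < 1.62 := OddCF.gr_lt
    have htsq : goldenRatio'^2 = goldenRatio' + 1 := OddCF.gr_sq
    have hnored : ∀ n, ¬ Red (w n) (η n) := by
      intro n hredn
      have hup : ∀ k, Red (w (n+k)) (η (n+k)) := by
        intro k
        induction k with
        | zero => exact hredn
        | succ k ih =>
          obtain ⟨ε, d, hsx, hodd, hd1, hws, hηs, hmar⟩ := hstep (n+k)
          exact red_step hsx hd1 hηs hmar (hwne0 _) ih
      have hkey := hup (p*(n+1) - n)
      have hpn : n + (p*(n+1) - n) = p*(n+1) := by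
        have : n+1 ≤ p*(n+1) := Nat.le_mul_of_pos_left _ hp1
        omega
      rw [hpn] at hkey
      have hw00 : w (p*(n+1)) = ω := hwmul (n+1)
      have hη00 : η (p*(n+1)) = η 0 := by
        show OddCF.conjOf (w (p*(n+1))) = OddCF.conjOf (w 0)
        rw [hw00, hw0]
      rw [hw00, hη00, ← hw0] at hkey
      exact hnred hkey
    have hlow : ∀ n, w n < 0 → -goldenRatio' - 1 < η n := by
      intro n hn
      by_contra hle
      push_neg at hle
      exact hnored n (Or.inl ⟨hn, hle⟩)
    have hlow2 : ∀ n, 0 < w n → -goldenRatio' + 1 < η n := by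
      intro n hn
      by_contra hle
      push_neg at hle
      exact hnored n (Or.inr ⟨hn, hle⟩)
    have hsgn : ∀ n, (0 < w n → 0 < η n) ∧ (w n < 0 → η n < 0) := by
      intro n
      constructor
      · intro hpos
        rcases (hηne0 n).lt_or_gt with hneg | hp
        · exfalso
          apply hnored (n+1)
          obtain ⟨ε, d, hsx, hodd, hd1, hws, hηs, hmar⟩ := hstep n
          have hε : ε = 1 := by
            rcases hsx with ⟨h, -⟩ | ⟨-, h⟩
            · exact h
            · linarith
          subst hε
          push_cast at hηs
          have hinv : 1/(η n) < 0 := div_neg_of_pos_of_neg one_pos hneg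
          have hη' : η (n+1) < -(d:ℝ) := by rw [hηs]; linarith
          exact red_of_lt_neg_d hd1 hmar (hwne0 (n+1)) hη'
        · exact hp
      · intro hneg
        rcases (hηne0 n).lt_or_gt with hn | hp
        · exact hn
        · exfalso
          apply hnored (n+1)
          obtain ⟨ε, d, hsx, hodd, hd1, hws, hηs, hmar⟩ := hstep n
          have hε : ε = -1 := by
            rcases hsx with ⟨-, h⟩ | ⟨h, -⟩
            · linarith
            · exact h
          subst hε
          push_cast at hηs
          have hinv : (-1)/(η n) < 0 := div_neg_of_neg_of_pos (by norm_num) hp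
          have hη' : η (n+1) < -(d:ℝ) := by rw [hηs]; linarith
          exact red_of_lt_neg_d hd1 hmar (hwne0 (n+1)) hη'
    have hprod2 : (2 - goldenRatio')*(1 + goldenRatio') = 1 := by nlinarith [htsq]
    have hSstep : ∀ n, (w n < 0 ∧ η n < -2) →
        ((w (n+1) < 0 ∧ η (n+1) < -2) ∧
          η (n+1) + 1 + goldenRatio' ≤ (1/2)*(η n + 1 + goldenRatio')) := by
      intro n ⟨hwn, hηn2⟩
      obtain ⟨ε, d, hsx, hodd, hd1, hws, hηs, hmar⟩ := hstep n
      have hε : ε = -1 := by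
        rcases hsx with ⟨-, h⟩ | ⟨h, -⟩
        · linarith
        · exact h
      subst hε
      push_cast at hηs
      have hvneg : η n < 0 := by linarith
      have hηlow := hlow n hwn
      have hb1 : (-1)/(η n) < 1/2 := by
        rw [div_lt_iff_of_neg hvneg]
        linarith
      have hb2 : 2 - goldenRatio' < (-1)/(η n) := by
        rw [lt_div_iff_of_neg hvneg]
        nlinarith
      have hdr : (1:ℝ) ≤ (d:ℝ) := by exact_mod_cast hd1
      have hwn1 : w (n+1) < 0 := by
        rcases (hwne0 (n+1)).lt_or_gt with h | h
        · exact h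
        · exfalso
          have hp := (hsgn (n+1)).1 h
          rw [hηs] at hp
          linarith
      have h3 : 3 ≤ d := hmar hwn1
      have hlow1 := hlow (n+1) hwn1
      have hd3 : d = 3 := by
        by_contra hne3
        have h5 : 5 ≤ d := by
          obtain ⟨k, hk⟩ := hodd
          omega
        have h5r : (5:ℝ) ≤ (d:ℝ) := by exact_mod_cast h5
        rw [hηs] at hlow1
        linarith
      subst hd3
      push_cast at hηs
      have hS1 : η (n+1) < -2 := by rw [hηs]; linarith
      refine ⟨⟨hwn1, hS1⟩, ?_⟩
      have hvne : η n ≠ 0 := hηne0 n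
      have hkey : (η (n+1) + 1 + goldenRatio') * (η n) = (goldenRatio' - 2)*(η n) - 1 := by
        rw [hηs]
        field_simp
        ring
      have hpos1 : 0 < η (n+1) + 1 + goldenRatio' := by linarith
      have hpos0 : 0 < η n + 1 + goldenRatio' := by linarith
      nlinarith [hkey, hpos1, hpos0, hvneg, hηn2,
        mul_nonneg hpos1.le (show (0:ℝ) ≤ -(η n) - 2 by linarith),
        mul_nonneg (show (0:ℝ) ≤ goldenRatio' - 1.6 by linarith) hpos0.le]
    have hnoS : ∀ n, ¬ (w n < 0 ∧ η n < -2) := by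
      intro m hSm
      have hchain : ∀ k, (w (m+k) < 0 ∧ η (m+k) < -2) ∧
          η (m+k) + 1 + goldenRatio' ≤ (1/2)^k * (η m + 1 + goldenRatio') := by
        intro k
        induction k with
        | zero => exact ⟨hSm, by simp⟩
        | succ k ih =>
          obtain ⟨hSk, hck⟩ := ih
          obtain ⟨hSk1, hck1⟩ := hSstep (m+k) hSk
          have hidx : m + (k+1) = m + k + 1 := rfl
          rw [hidx]
          refine ⟨hSk1, ?_⟩
          have hmul := mul_le_mul_of_nonneg_left hck (by norm_num : (0:ℝ) ≤ 1/2)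
          rw [pow_succ]
          linarith [hck1, hmul]
      have hfin := (hchain p).2
      have hforms : m + p = m + p := rfl
      rw [hηp m] at hfin
      have hposm : 0 < η m + 1 + goldenRatio' := by linarith [hlow m hSm.1]
      have hpow : (1/2:ℝ)^p ≤ 1/2 := by
        calc (1/2:ℝ)^p ≤ (1/2)^1 := pow_le_pow_of_le_one (by norm_num) (by norm_num) hp1
        _ = 1/2 := pow_one _
      nlinarith [hfin, hposm, hpow, mul_le_mul_of_nonneg_right hpow hposm.le]
    have habs : ∀ n, -1 < η n ∧ η n < 1 := by
      intro n
      rcases (hwne0 n).lt_or_gt with hn | hp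
      · have hηn : η n < 0 := (hsgn n).2 hn
        refine ⟨?_, by linarith⟩
        by_contra hle
        push_neg at hle
        have hlt : η n < -1 := by
          rcases lt_or_eq_of_le hle with h | h
          · exact h
          · exfalso
            exact (hηirr n).ne_int (-1) (by rw [h]; norm_num)
        obtain ⟨ε, d, hsx, hodd, hd1, hws, hηs, hmar⟩ := hstep n
        have hε : ε = -1 := by
          rcases hsx with ⟨-, h⟩ | ⟨h, -⟩
          · linarith
          · exact h
        subst hε
        push_cast at hηs
        have hb0 : 0 < (-1)/(η n) := div_pos_of_neg_of_neg (by norm_num) (by linarith)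
        have hb1 : (-1)/(η n) < 1 := by
          rw [div_lt_iff_of_neg (by linarith : η n < 0)]
          linarith
        have hdr : (1:ℝ) ≤ (d:ℝ) := by exact_mod_cast hd1
        rcases (hwne0 (n+1)).lt_or_gt with h | h
        · have h3 : (3:ℝ) ≤ (d:ℝ) := by exact_mod_cast hmar h
          apply hnoS (n+1)
          exact ⟨h, by rw [hηs]; linarith⟩
        · have := (hsgn (n+1)).1 h
          rw [hηs] at this
          linarith
      · have hηn : 0 < η n := (hsgn n).1 hp
        refine ⟨by linarith, ?_⟩
        by_contra hle
        push_neg at hle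
        have hlt : 1 < η n := by
          rcases lt_or_eq_of_le hle with h | h
          · exact h
          · exfalso
            exact (hηirr n).ne_int 1 (by rw [← h]; norm_num)
        obtain ⟨ε, d, hsx, hodd, hd1, hws, hηs, hmar⟩ := hstep n
        have hε : ε = 1 := by
          rcases hsx with ⟨h, -⟩ | ⟨-, h⟩
          · exact h
          · linarith
        subst hε
        push_cast at hηs
        have hb0 : 0 < 1/(η n) := by positivity
        have hb1 : 1/(η n) < 1 := by
          rw [div_lt_one (by linarith : (0:ℝ) < η n)]
          linarith
        have hdr : (1:ℝ) ≤ (d:ℝ) := by exact_mod_cast hd1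
        rcases (hwne0 (n+1)).lt_or_gt with h | h
        · have h3 : (3:ℝ) ≤ (d:ℝ) := by exact_mod_cast hmar h
          apply hnoS (n+1)
          exact ⟨h, by rw [hηs]; linarith⟩
        · have := (hsgn (n+1)).1 h
          rw [hηs] at this
          linarith
    have hexp : ∀ n, |η n - w n| < |η (n+1) - w (n+1)| := by
      intro n
      obtain ⟨ε, d, hsx, hodd, hd1, hws, hηs, hmar⟩ := hstep n
      have hkey : (η (n+1) - w (n+1)) * (η n * w n) = (ε:ℝ) * (w n - η n) := by
        rw [hηs, hws]
        field_simp [hηne0 n, hwne0 n]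
        ring
      have hεabs : |(ε:ℝ)| = 1 := by
        rcases hsx with ⟨h, -⟩ | ⟨h, -⟩ <;> rw [h] <;> norm_num
      have habs' : |η (n+1) - w (n+1)| * |η n * w n| = |w n - η n| := by
        have h := congrArg abs hkey
        rw [abs_mul (η (n+1) - w (n+1)) (η n * w n), abs_mul ((ε:ℝ)) (w n - η n),
          hεabs, one_mul] at h
        exact h
      have h0 : 0 < |w n - η n| := by
        rw [abs_pos, sub_ne_zero]
        exact (hcp n).ne
      have hq0 : 0 < |η n * w n| := abs_pos.mpr (mul_ne_zero (hηne0 n) (hwne0 n))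
      have hq1 : |η n * w n| < 1 := by
        rw [abs_mul]
        have hη1 : |η n| < 1 := abs_lt.mpr ⟨(habs n).1, (habs n).2⟩
        have hw1' : |w n| < 1 := abs_lt.mpr ⟨hw1 n, hw2 n⟩
        nlinarith [abs_nonneg (η n), abs_nonneg (w n)]
      have hC : |η n - w n| = |w n - η n| := abs_sub_comm _ _
      rw [hC]
      nlinarith [habs', hq0, hq1, h0, abs_nonneg (η (n+1) - w (n+1))]
    have hmono : ∀ k, |η 0 - w 0| ≤ |η k - w k| := by
      intro k
      induction k with
      | zero => exact le_refl _
      | succ k ih => exact le_of_lt (lt_of_le_of_lt ih (hexp k))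
    obtain ⟨q, hq⟩ : ∃ q, p = q + 1 := ⟨p - 1, by omega⟩
    have hfinal : |η 0 - w 0| < |η p - w p| := by
      rw [hq]
      exact lt_of_le_of_lt (hmono q) (hexp q)
    have hwp0 : w p = w 0 := by
      have := hwp 0
      simpa using this
    have hηp0 : η p = η 0 := by
      have := hηp 0
      simpa using this
    rw [hwp0, hηp0] at hfinal
    exact lt_irrefl _ hfinal

  · intro hred0
    have hred : ∀ n, Red (w n) (η n) := by
      intro n
      induction n with
      | zero => exact hred0
      | succ n ih =>
        obtain ⟨ε, d, hsx, hodd, hd1, hws, hηs, hmar⟩ := hstep n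
        exact red_step hsx hd1 hηs hmar (hwne0 _) ih
    set D0 : ℤ := b^2 - 4*a*c with hD0
    have htri : ∀ n, ∃ A B C : ℤ, A ≠ 0 ∧
        ((A:ℝ)*(w n)^2 + (B:ℝ)*(w n) + (C:ℝ) = 0) ∧
        η n = -(B:ℝ)/(A:ℝ) - w n ∧ B^2 - 4*A*C = D0 := by
      intro n
      induction n with
      | zero =>
        exact ⟨a, b, c, ha, by rw [hw0]; exact hroot, by rw [hη0, hw0], rfl⟩
      | succ n ih =>
        obtain ⟨A, B, C, hA, hr, hy, hdisc⟩ := ih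
        obtain ⟨ε, d, hsx, hodd, hd1, hws, hηs, hmar⟩ := hstep n
        have hε : ε = 1 ∨ ε = -1 := hsx.imp And.left And.left
        obtain ⟨hC, hroot', hval⟩ := OddCF.conj_step (w n) (η n) (hwirr n) A B C hA hr hy ε d hε
        refine ⟨C, 2*C*d + ε*B, C*d^2 + ε*B*d + A, hC, ?_, ?_, ?_⟩
        · rw [hws]; exact hroot'
        · rw [hηs, hws]; exact hval
        · rw [← hdisc]; exact OddCF.disc_step A B C ε d hε
    have hbound : ∀ n, ∃ A B C : ℤ, A ≠ 0 ∧ |A| ≤ 13*D0 ∧ |B| ≤ 13*D0 ∧ |C| ≤ 13*D0 ∧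
        ((A:ℝ)*(w n)^2 + (B:ℝ)*(w n) + (C:ℝ) = 0) := by
      intro n
      obtain ⟨A, B, C, hA, hr, hy, hdisc⟩ := htri n
      obtain ⟨ε, d, hsx, hodd, hd1, hws, hηs, hmar⟩ := hstep n
      have hε : ε = 1 ∨ ε = -1 := hsx.imp And.left And.left
      obtain ⟨hC, hroot', hval⟩ := OddCF.conj_step (w n) (η n) (hwirr n) A B C hA hr hy ε d hε
      have hAb := OddCF.lead_bound A B C hA hr hy (hw1 n) (hw2 n) (hred n)
      rw [hdisc] at hAb
      have hA2 : A^2 ≤ 3*D0 := by exact_mod_cast hAb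
      have hr1 : (C:ℝ)*(w (n+1))^2 + ((2*C*d+ε*B:ℤ):ℝ)*(w (n+1)) + ((C*d^2+ε*B*d+A:ℤ):ℝ) = 0 := by
        rw [hws]; exact hroot'
      have hy1 : η (n+1) = -((2*C*d+ε*B:ℤ):ℝ)/((C:ℤ):ℝ) - w (n+1) := by
        rw [hηs, hws]; exact hval
      have hCb := OddCF.lead_bound C (2*C*d+ε*B) (C*d^2+ε*B*d+A) hC hr1 hy1
        (hw1 (n+1)) (hw2 (n+1)) (hred (n+1))
      have hdisc1 : (2*C*d+ε*B)^2 - 4*C*(C*d^2+ε*B*d+A) = D0 := by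
        rw [← hdisc]; exact OddCF.disc_step A B C ε d hε
      rw [hdisc1] at hCb
      have hC2 : C^2 ≤ 3*D0 := by exact_mod_cast hCb
      have hD0nn : 0 ≤ D0 := by nlinarith [sq_nonneg A]
      have hB2 : B^2 ≤ 13*D0 := by nlinarith [sq_nonneg (A+C), sq_nonneg (A-C)]
      have habsA : |A| ≤ A^2 := by nlinarith [Int.one_le_abs hA, sq_abs A]
      have habsC : |C| ≤ C^2 := by nlinarith [Int.one_le_abs hC, sq_abs C]
      have habsB : |B| ≤ B^2 := by
        rcases eq_or_ne B 0 with h | h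
        · simp [h]
        · nlinarith [Int.one_le_abs h, sq_abs B]
      exact ⟨A, B, C, hA, by linarith, by linarith, by linarith, hr⟩
    have hVfin : Set.Finite {x : ℝ | ∃ A B C : ℤ, A ≠ 0 ∧
        |A| ≤ 13*D0 ∧ |B| ≤ 13*D0 ∧ |C| ≤ 13*D0 ∧
        (A:ℝ)*x^2 + (B:ℝ)*x + (C:ℝ) = 0} := OddCF.badset_finite (13*D0)
    haveI := hVfin.to_subtype
    obtain ⟨m, m', hnemm, heqmm⟩ := Finite.exists_ne_map_eq_of_infinite
      (fun n : ℕ => (⟨w n, hbound n⟩ : {x : ℝ | ∃ A B C : ℤ, A ≠ 0 ∧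
        |A| ≤ 13*D0 ∧ |B| ≤ 13*D0 ∧ |C| ≤ 13*D0 ∧
        (A:ℝ)*x^2 + (B:ℝ)*x + (C:ℝ) = 0}))
    have heqw : w m = w m' := by
      simpa [Subtype.ext_iff] using heqmm
    have hback : ∀ i j : ℕ, w (i+1) = w (j+1) → w i = w j := by
      intro i j hww
      have hηη : η (i+1) = η (j+1) := by
        show OddCF.conjOf (w (i+1)) = OddCF.conjOf (w (j+1))
        rw [hww]
      obtain ⟨ε, d, hsx, hodd, hd1, hws, hηs, hmar⟩ := hstep i
      obtain ⟨E, D, hsX, hoddX, hD1, hwsX, hηsX, hmarX⟩ := hstep j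
      exact OddCF.back_step (hcp i) (hcp j) (hw1 i) (hw2 i) (hw1 j) (hw2 j)
        (hred i) (hred j) hsx hsX hodd hoddX hws (by rw [hww]; exact hwsX)
        hηs (by rw [hηη]; exact hηsX)
    have hdown : ∀ k i j, w (i+k) = w (j+k) → w i = w j := by
      intro k
      induction k with
      | zero => intro i j h; simpa using h
      | succ k ih =>
        intro i j h
        apply ih
        apply hback
        exact h
    have hmain : ∀ (u v : ℕ), u < v → w u = w v → (∃ p : ℕ, 1 ≤ p ∧ oddMap^[p] ω = ω) := by
      intro u v huv he
      set q := v - u with hq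
      have h0q : w 0 = w q := by
        apply hdown u 0 q
        have e1 : 0 + u = u := by omega
        have e2 : q + u = v := by omega
        rw [e1, e2]
        exact he
      refine ⟨q, by omega, ?_⟩
      show w q = ω
      rw [← h0q, hw0]
    rcases hnemm.lt_or_gt with hlt | hlt
    · exact hmain m m' hlt heqw
    · exact hmain m' m hlt heqw.symm
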